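/- Under the discretized (Galerkin) piezoelectric setting: let t₀ ≥ 0, let f : ℝ → ℝⁿ be continuous and g : ℝ → ℝᵏ be continuously differentiable with f(t) = 0 and g(t) = 0 for all t ≥ t₀, and let (u, φ) solve the discretized piezoelectric system on [0, ∞) with u twice continuously differentiable and φ continuously differentiable. Then the energy function η̃(t) := ⟨M u'(t), u'(t)⟩ + ⟨K u(t), u(t)⟩ + ⟨A φ(t), φ(t)⟩ is monotonically nonincreasing on [t₀, ∞). -/

import Mathlib

open MeasureTheory Matrix Set Filter

/-- The pair `(u, φ)` (with first and second derivatives `u'`, `u''` of `u`) solves the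
discretized (Galerkin) piezoelectric system with mass matrix `M`, stiffness matrix `K`,
dielectric matrix `A`, piezoelectric coupling matrix `C`, Rayleigh damping parameters
`α, β` and forcing terms `f, g` on the time set `I`. -/
def PiezoSolves {n k : ℕ} (M K : Matrix (Fin n) (Fin n) ℝ)
    (A : Matrix (Fin k) (Fin k) ℝ) (C : Matrix (Fin n) (Fin k) ℝ)
    (α β : ℝ) (f : ℝ → Fin n → ℝ) (g : ℝ → Fin k → ℝ)
    (u u' u'' : ℝ → Fin n → ℝ) (φ : ℝ → Fin k → ℝ) (I : Set ℝ) : Prop :=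
  (∀ t ∈ I, HasDerivAt u (u' t) t) ∧
  (∀ t ∈ I, HasDerivAt u' (u'' t) t) ∧
  (∀ t ∈ I,
    M.mulVec (u'' t) + α • M.mulVec (u' t) + K.mulVec (u t)
      + β • K.mulVec (u' t) + C.mulVec (φ t) = f t) ∧
  (∀ t ∈ I, Cᵀ.mulVec (u t) - A.mulVec (φ t) = g t)

lemma hasDerivAt_mulVec_dot {m q : ℕ} (B : Matrix (Fin m) (Fin q) ℝ)
    {v : ℝ → Fin q → ℝ} {w : ℝ → Fin m → ℝ} {v' : Fin q → ℝ} {w' : Fin m → ℝ} {t : ℝ}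
    (hv : HasDerivAt v v' t) (hw : HasDerivAt w w' t) :
    HasDerivAt (fun s => B.mulVec (v s) ⬝ᵥ w s)
      (B.mulVec v' ⬝ᵥ w t + B.mulVec (v t) ⬝ᵥ w') t := by
  have hv' := hasDerivAt_pi.1 hv
  have hw' := hasDerivAt_pi.1 hw
  simp only [Matrix.mulVec, dotProduct, ← Finset.sum_add_distrib]
  exact HasDerivAt.fun_sum fun i _ =>
    ((HasDerivAt.fun_sum fun j _ => (hv' j).const_mul (B i j)).mul (hw' i))

lemma hasDerivAt_mulVec {m q : ℕ} (B : Matrix (Fin m) (Fin q) ℝ)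
    {v : ℝ → Fin q → ℝ} {v' : Fin q → ℝ} {t : ℝ} (hv : HasDerivAt v v' t) :
    HasDerivAt (fun s => B.mulVec (v s)) (B.mulVec v') t := by
  have hv' := hasDerivAt_pi.1 hv
  rw [hasDerivAt_pi]
  intro i
  simp only [Matrix.mulVec, dotProduct]
  exact HasDerivAt.fun_sum fun j _ => (hv' j).const_mul (B i j)

lemma continuousOn_mulVec_dot {m q : ℕ} (B : Matrix (Fin m) (Fin q) ℝ)
    {v : ℝ → Fin q → ℝ} {w : ℝ → Fin m → ℝ} {s : Set ℝ}
    (hv : ContinuousOn v s) (hw : ContinuousOn w s) :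
    ContinuousOn (fun t => B.mulVec (v t) ⬝ᵥ w t) s := by
  simp only [Matrix.mulVec, dotProduct]
  apply continuousOn_finset_sum
  intro i _
  exact (continuousOn_finset_sum _ fun j _ =>
      continuousOn_const.mul ((continuous_apply j).comp_continuousOn hv)).mul
    ((continuous_apply i).comp_continuousOn hw)

lemma symm_mulVec_dot {m : ℕ} {S : Matrix (Fin m) (Fin m) ℝ} (hS : S.IsHermitian)
    (x y : Fin m → ℝ) : S.mulVec x ⬝ᵥ y = S.mulVec y ⬝ᵥ x := by
  rw [dotProduct_comm, Matrix.dotProduct_mulVec, ← Matrix.mulVec_transpose]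
  congr 1
  rw [← Matrix.conjTranspose_eq_transpose_of_trivial, hS.eq]

lemma transpose_mulVec_dot {m q : ℕ} (B : Matrix (Fin m) (Fin q) ℝ)
    (x : Fin m → ℝ) (y : Fin q → ℝ) :
    Bᵀ.mulVec x ⬝ᵥ y = B.mulVec y ⬝ᵥ x := by
  rw [Matrix.mulVec_transpose, ← Matrix.dotProduct_mulVec, dotProduct_comm]

/-- Long-term behavior: once the excitation vanishes (for `t ≥ t₀`), the energy
`η̃(t) = ⟨M u'(t), u'(t)⟩ + ⟨K u(t), u(t)⟩ + ⟨A φ(t), φ(t)⟩` is monotonically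
nonincreasing on `[t₀, ∞)`. -/
theorem piezo_discrete_energy_antitone {n k : ℕ}
    (M K : Matrix (Fin n) (Fin n) ℝ) (A : Matrix (Fin k) (Fin k) ℝ)
    (C : Matrix (Fin n) (Fin k) ℝ) (α β : ℝ)
    (hM : M.PosDef) (hK : K.PosSemidef) (hA : A.PosDef)
    (hα : 0 ≤ α) (hβ : 0 ≤ β)
    (t₀ : ℝ) (ht₀ : 0 ≤ t₀)
    (f : ℝ → Fin n → ℝ) (hf : Continuous f)
    (g g' : ℝ → Fin k → ℝ) (hg : ∀ t, HasDerivAt g (g' t) t) (hg' : Continuous g')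
    (hf0 : ∀ t ≥ t₀, f t = 0) (hg0 : ∀ t ≥ t₀, g t = 0)
    (u u' u'' : ℝ → Fin n → ℝ) (φ φ' : ℝ → Fin k → ℝ)
    (hsol : PiezoSolves M K A C α β f g u u' u'' φ (Ici 0))
    (hu'' : ContinuousOn u'' (Ici 0))
    (hφ : ∀ t ∈ Ici (0 : ℝ), HasDerivAt φ (φ' t) t)
    (hφ' : ContinuousOn φ' (Ici 0)) :
    AntitoneOn
      (fun t => M.mulVec (u' t) ⬝ᵥ u' t + K.mulVec (u t) ⬝ᵥ u t + A.mulVec (φ t) ⬝ᵥ φ t)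
      (Ici t₀) := by
  obtain ⟨hu, hu', heq1, heq2⟩ := hsol
  have hIci : Ici t₀ ⊆ Ici (0 : ℝ) := Ici_subset_Ici.2 ht₀
  have hucont : ContinuousOn u (Ici 0) :=
    fun t ht => (hu t ht).continuousAt.continuousWithinAt
  have hu'cont : ContinuousOn u' (Ici 0) :=
    fun t ht => (hu' t ht).continuousAt.continuousWithinAt
  have hφcont : ContinuousOn φ (Ici 0) :=
    fun t ht => (hφ t ht).continuousAt.continuousWithinAt
  -- key: derivative of the energy on the interior
  have key : ∀ t ∈ interior (Ici t₀),
      HasDerivAt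
        (fun t => M.mulVec (u' t) ⬝ᵥ u' t + K.mulVec (u t) ⬝ᵥ u t + A.mulVec (φ t) ⬝ᵥ φ t)
        (-(2 * α) * (M.mulVec (u' t) ⬝ᵥ u' t) - (2 * β) * (K.mulVec (u' t) ⬝ᵥ u' t)) t := by
    intro t ht
    rw [interior_Ici] at ht
    have ht0 : t ∈ Ici (0 : ℝ) := le_of_lt (lt_of_le_of_lt ht₀ ht)
    have hd := ((hasDerivAt_mulVec_dot M (hu' t ht0) (hu' t ht0)).add
        (hasDerivAt_mulVec_dot K (hu t ht0) (hu t ht0))).add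
      (hasDerivAt_mulVec_dot A (hφ t ht0) (hφ t ht0))
    refine hd.congr_deriv ?_
    -- the first equation, dotted with u'
    have e1 : M.mulVec (u'' t) ⬝ᵥ u' t + α * (M.mulVec (u' t) ⬝ᵥ u' t)
        + K.mulVec (u t) ⬝ᵥ u' t + β * (K.mulVec (u' t) ⬝ᵥ u' t)
        + C.mulVec (φ t) ⬝ᵥ u' t = 0 := by
      have h := congrArg (fun z => z ⬝ᵥ u' t) (heq1 t ht0)
      simp only [hf0 t ht.le, add_dotProduct, smul_dotProduct,
        zero_dotProduct, smul_eq_mul] at h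
      linarith [h]
    -- the differentiated second equation on the interior
    have e2 : Cᵀ.mulVec (u' t) - A.mulVec (φ' t) = 0 := by
      have h1 := (hasDerivAt_mulVec Cᵀ (hu t ht0)).sub (hasDerivAt_mulVec A (hφ t ht0))
      have h3 : (fun s => Cᵀ.mulVec (u s) - A.mulVec (φ s)) =ᶠ[nhds t]
          (fun _ => (0 : Fin k → ℝ)) := by
        filter_upwards [isOpen_Ioi.mem_nhds ht] with s hs
        rw [heq2 s (le_of_lt (lt_of_le_of_lt ht₀ hs)), hg0 s hs.le]
      have h4 : HasDerivAt (fun _ : ℝ => (0 : Fin k → ℝ))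
          (Cᵀ.mulVec (u' t) - A.mulVec (φ' t)) t := h1.congr_of_eventuallyEq h3.symm
      exact h4.unique (hasDerivAt_const t 0)
    have e2' : A.mulVec (φ' t) ⬝ᵥ φ t = C.mulVec (φ t) ⬝ᵥ u' t := by
      have : A.mulVec (φ' t) = Cᵀ.mulVec (u' t) := by
        have := sub_eq_zero.mp e2; exact this.symm
      rw [this, transpose_mulVec_dot]
    have s1 : M.mulVec (u'' t) ⬝ᵥ u' t = M.mulVec (u' t) ⬝ᵥ u'' t :=
      symm_mulVec_dot hM.1 _ _
    have s2 : K.mulVec (u' t) ⬝ᵥ u t = K.mulVec (u t) ⬝ᵥ u' t :=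
      symm_mulVec_dot hK.1 _ _
    have s3 : A.mulVec (φ t) ⬝ᵥ φ' t = A.mulVec (φ' t) ⬝ᵥ φ t :=
      symm_mulVec_dot hA.1 _ _
    rw [s2, s3, ← s1, e2']
    linarith [e1]
  apply antitoneOn_of_deriv_nonpos (convex_Ici t₀)
  · exact ((continuousOn_mulVec_dot M (hu'cont.mono hIci) (hu'cont.mono hIci)).add
      (continuousOn_mulVec_dot K (hucont.mono hIci) (hucont.mono hIci))).add
      (continuousOn_mulVec_dot A (hφcont.mono hIci) (hφcont.mono hIci))
  · exact fun t ht => (key t ht).differentiableAt.differentiableWithinAt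
  · intro t ht
    rw [(key t ht).deriv]
    have hx : 0 ≤ M.mulVec (u' t) ⬝ᵥ u' t := by
      have := hM.posSemidef.dotProduct_mulVec_nonneg (u' t)
      simpa [dotProduct_comm] using this
    have hy : 0 ≤ K.mulVec (u' t) ⬝ᵥ u' t := by
      have := hK.dotProduct_mulVec_nonneg (u' t)
      simpa [dotProduct_comm] using this
    have h1 : 0 ≤ 2 * α * (M.mulVec (u' t) ⬝ᵥ u' t) := by positivity
    have h2 : 0 ≤ 2 * β * (K.mulVec (u' t) ⬝ᵥ u' t) := by positivity
    linarith
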